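/- Let f ∈ ℝ[x₁,…,xₙ] satisfy conditions (C1), (C2) and (C3) and let λ_f be a map of minimal barycentric coordinates of f. If Σ_{α*∈D(f), α*∉(2ℕ₀)ⁿ} |f_{α*}|/Θ(f,λ_f,α*) − Σ_{α*∈D(f), α*∈(2ℕ₀)ⁿ} min{0, f_{α*}}/Θ(f,λ_f,α*) < 1, then f is coercive on ℝⁿ. -/

import Mathlib

open MvPolynomial Filter

noncomputable section

open scoped Classical

/-- The embedding of exponent vectors into `ℝⁿ`. -/
def expEmbed {n : ℕ} (α : Fin n →₀ ℕ) : Fin n → ℝ := fun i => (α i : ℝ)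

/-- The Newton polytope at infinity `New∞(f) = conv(A(f) ∪ {0})`. -/
def newtonInfty {n : ℕ} (f : MvPolynomial (Fin n) ℝ) : Set (Fin n → ℝ) :=
  convexHull ℝ (expEmbed '' ((insert 0 f.support : Finset (Fin n →₀ ℕ)) : Set (Fin n →₀ ℕ)))

/-- The vertex set `V₀(f)` of the Newton polytope at infinity, as a
finset of exponent vectors. -/
def V0 {n : ℕ} (f : MvPolynomial (Fin n) ℝ) : Finset (Fin n →₀ ℕ) :=
  (insert 0 f.support).filter fun α => expEmbed α ∈ Set.extremePoints ℝ (newtonInfty f)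

/-- The set `V(f) = V₀(f) \ {0}` of vertices at infinity. -/
def Vinf {n : ℕ} (f : MvPolynomial (Fin n) ℝ) : Finset (Fin n →₀ ℕ) := (V0 f).erase 0

/-- An exponent vector with all entries even, i.e. a member of `(2ℕ₀)ⁿ`. -/
def IsEvenExp {n : ℕ} (α : Fin n →₀ ℕ) : Prop := ∀ i, Even (α i)

/-- Condition (C1): `V(f) ⊆ (2ℕ₀)ⁿ`. -/
def CondC1 {n : ℕ} (f : MvPolynomial (Fin n) ℝ) : Prop := ∀ α ∈ Vinf f, IsEvenExp α

/-- Condition (C2): positive coefficients at all vertices at infinity. -/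
def CondC2 {n : ℕ} (f : MvPolynomial (Fin n) ℝ) : Prop := ∀ α ∈ Vinf f, 0 < f.coeff α

/-- Condition (C3): `V(f)` contains a vector `2 kᵢ eᵢ` for every `i`. -/
def CondC3 {n : ℕ} (f : MvPolynomial (Fin n) ℝ) : Prop :=
  ∀ i : Fin n, ∃ k : ℕ, 0 < k ∧ Finsupp.single i (2 * k) ∈ Vinf f

/-- An exponent vector of `f` is gem degenerate if it is no vertex at infinity but lies in
some nonempty face of `New∞(f)` not containing the origin. -/
def IsGemDegenerate {n : ℕ} (f : MvPolynomial (Fin n) ℝ) (α : Fin n →₀ ℕ) : Prop :=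
  α ∈ f.support ∧ α ∉ Vinf f ∧
    ∃ G : Set (Fin n → ℝ), G.Nonempty ∧ IsExtreme ℝ (newtonInfty f) G ∧
      (0 : Fin n → ℝ) ∉ G ∧ expEmbed α ∈ G

/-- The set `D(f)` of gem degenerate exponent vectors of `f`. -/
def Dfin {n : ℕ} (f : MvPolynomial (Fin n) ℝ) : Finset (Fin n →₀ ℕ) :=
  f.support.filter fun α => IsGemDegenerate f α

/-- `f` is gem regular if `D(f) = ∅`. -/
def GemRegular {n : ℕ} (f : MvPolynomial (Fin n) ℝ) : Prop := ∀ α, ¬ IsGemDegenerate f α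

/-- `V₀ᶜ(f) = A(f) \ V₀(f)`. -/
def V0c {n : ℕ} (f : MvPolynomial (Fin n) ℝ) : Finset (Fin n →₀ ℕ) := f.support \ V0 f

/-- A map of minimal barycentric coordinates of `f`. -/
def IsMinBary {n : ℕ} (f : MvPolynomial (Fin n) ℝ)
    (lam : (Fin n →₀ ℕ) → (Fin n →₀ ℕ) → ℝ) : Prop :=
  (∀ αs α, 0 ≤ lam αs α ∧ lam αs α ≤ 1) ∧
  ∀ αs ∈ V0c f, ∃ W : Finset (Fin n →₀ ℕ), W ⊆ V0 f ∧
    AffineIndependent ℝ (fun w : W => expEmbed (w : Fin n →₀ ℕ)) ∧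
    (∀ α ∈ W, 0 < lam αs α) ∧
    (∀ α ∈ V0 f, α ∉ W → lam αs α = 0) ∧
    (∑ α ∈ W, lam αs α) = 1 ∧
    (∑ α ∈ W, lam αs α • expEmbed α) = expEmbed αs

/-- `W_{α*}(λ_f)`, the minimal vertex representation of `α*` corresponding to `λ_f`. -/
def Wfin {n : ℕ} (f : MvPolynomial (Fin n) ℝ)
    (lam : (Fin n →₀ ℕ) → (Fin n →₀ ℕ) → ℝ) (αs : Fin n →₀ ℕ) : Finset (Fin n →₀ ℕ) :=
  (V0 f).filter fun α => 0 < lam αs α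

/-- The circuit number `Θ(f, λ_f, α*)`. -/
def circuitNumber {n : ℕ} (f : MvPolynomial (Fin n) ℝ)
    (lam : (Fin n →₀ ℕ) → (Fin n →₀ ℕ) → ℝ) (αs : Fin n →₀ ℕ) : ℝ :=
  ∏ α ∈ Wfin f lam αs, (f.coeff α / lam αs α) ^ (lam αs α)

/-- `g` is coercive on `ℝⁿ`: `g(x) → +∞` whenever `‖x‖ → +∞`. -/
def Coercive {n : ℕ} (g : (Fin n → ℝ) → ℝ) : Prop :=
  Tendsto g (comap (fun x : Fin n → ℝ => ‖x‖) atTop) atTop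


section AuxGeom

variable {n : ℕ}

lemma expEmbed_injective : Function.Injective (expEmbed (n := n)) := by
  intro a b h
  ext i
  exact (by simpa [expEmbed] using congrFun h i)

lemma expEmbed_zero : expEmbed (0 : Fin n →₀ ℕ) = 0 := by
  funext i; simp [expEmbed]

lemma newton_convex (f : MvPolynomial (Fin n) ℝ) : Convex ℝ (newtonInfty f) :=
  convex_convexHull _ _

lemma newton_compact (f : MvPolynomial (Fin n) ℝ) : IsCompact (newtonInfty f) :=
  ((Set.toFinite _).image _).isCompact_convexHull ℝ

lemma mem_newton_of (f : MvPolynomial (Fin n) ℝ) {α : Fin n →₀ ℕ}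
    (hα : α ∈ insert (0 : Fin n →₀ ℕ) f.support) : expEmbed α ∈ newtonInfty f :=
  subset_convexHull _ _ ⟨α, by simpa using hα, rfl⟩

lemma newton_nonneg (f : MvPolynomial (Fin n) ℝ) {y : Fin n → ℝ}
    (hy : y ∈ newtonInfty f) (i : Fin n) : 0 ≤ y i := by
  have hsub : newtonInfty f ⊆ {y : Fin n → ℝ | ∀ i, 0 ≤ y i} := by
    apply convexHull_min
    · rintro y ⟨α, -, rfl⟩ i; exact Nat.cast_nonneg _
    · intro a ha b hb s t hs ht hst i
      have := add_nonneg (mul_nonneg hs (ha i)) (mul_nonneg ht (hb i))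
      simpa [smul_eq_mul] using this
  exact hsub hy i

lemma zero_mem_newton (f : MvPolynomial (Fin n) ℝ) : (0 : Fin n → ℝ) ∈ newtonInfty f := by
  have := mem_newton_of f (Finset.mem_insert_self 0 _)
  rwa [expEmbed_zero] at this

lemma zero_mem_V0 (f : MvPolynomial (Fin n) ℝ) : (0 : Fin n →₀ ℕ) ∈ V0 f := by
  rw [V0, Finset.mem_filter]
  refine ⟨Finset.mem_insert_self _ _, ?_⟩
  rw [expEmbed_zero, mem_extremePoints]
  refine ⟨zero_mem_newton f, ?_⟩
  intro x1 hx1 x2 hx2 h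
  obtain ⟨a, b, ha, hb, hab, habx⟩ := h
  have hx1' : x1 = 0 := by
    funext i
    have h1 := newton_nonneg f hx1 i
    have h2 := newton_nonneg f hx2 i
    have h3 : a * x1 i + b * x2 i = 0 := by
      have := congrFun habx i
      simpa [smul_eq_mul] using this
    have h4 : a * x1 i = 0 :=
      le_antisymm (by nlinarith [mul_nonneg hb.le h2]) (mul_nonneg ha.le h1)
    rcases mul_eq_zero.mp h4 with h | h
    · exact absurd h ha.ne'
    · exact h
  subst hx1'
  refine ⟨rfl, ?_⟩
  funext i
  have h2 := newton_nonneg f hx2 i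
  have h3 : b * x2 i = 0 := by
    have := congrFun habx i
    simpa [smul_eq_mul] using this
  rcases mul_eq_zero.mp h3 with h | h
  · exact absurd h hb.ne'
  · exact h

lemma V0_eq (f : MvPolynomial (Fin n) ℝ) : V0 f = insert 0 (Vinf f) :=
  (Finset.insert_erase (zero_mem_V0 f)).symm

lemma zero_not_mem_Vinf (f : MvPolynomial (Fin n) ℝ) : (0 : Fin n →₀ ℕ) ∉ Vinf f :=
  Finset.notMem_erase _ _

lemma Vinf_subset_V0 (f : MvPolynomial (Fin n) ℝ) : Vinf f ⊆ V0 f :=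
  Finset.erase_subset _ _

lemma V0_subset_insert (f : MvPolynomial (Fin n) ℝ) :
    V0 f ⊆ insert 0 f.support := Finset.filter_subset _ _

lemma Vinf_subset_support (f : MvPolynomial (Fin n) ℝ) : Vinf f ⊆ f.support := by
  intro α hα
  have h0 : α ≠ 0 := by rintro rfl; exact zero_not_mem_Vinf f hα
  rcases Finset.mem_insert.mp (V0_subset_insert f (Vinf_subset_V0 f hα)) with h | h
  · exact absurd h h0
  · exact h

lemma newton_eq_hull_V0 (f : MvPolynomial (Fin n) ℝ) :
    newtonInfty f = convexHull ℝ (expEmbed '' (V0 f : Set (Fin n →₀ ℕ))) := by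
  apply Set.Subset.antisymm
  · have hKM := closure_convexHull_extremePoints (newton_compact f) (newton_convex f)
    have hsub : Set.extremePoints ℝ (newtonInfty f) ⊆ expEmbed '' (V0 f : Set (Fin n →₀ ℕ)) := by
      intro x hx
      have hx' : x ∈ expEmbed '' ((insert 0 f.support : Finset (Fin n →₀ ℕ)) : Set (Fin n →₀ ℕ)) :=
        extremePoints_convexHull_subset hx
      obtain ⟨α, hα, rfl⟩ := hx'
      exact ⟨α, Finset.mem_filter.mpr ⟨by simpa using hα, hx⟩, rfl⟩
    calc newtonInfty f
        = closure (convexHull ℝ (Set.extremePoints ℝ (newtonInfty f))) := hKM.symm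
      _ ⊆ closure (convexHull ℝ (expEmbed '' (V0 f : Set (Fin n →₀ ℕ)))) :=
          closure_mono (convexHull_mono hsub)
      _ = convexHull ℝ (expEmbed '' (V0 f : Set (Fin n →₀ ℕ))) :=
          ((Set.toFinite _).isClosed_convexHull ℝ).closure_eq
  · exact convexHull_mono (Set.image_mono (by exact_mod_cast V0_subset_insert f))

lemma mem_newton_rep (f : MvPolynomial (Fin n) ℝ) {y : Fin n → ℝ} (hy : y ∈ newtonInfty f) :
    ∃ w : (Fin n →₀ ℕ) → ℝ, (∀ α, 0 ≤ w α) ∧ (∑ α ∈ V0 f, w α) = 1 ∧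
      (∑ α ∈ V0 f, w α • expEmbed α) = y := by
  rw [newton_eq_hull_V0 f, ← Finset.coe_image, Finset.convexHull_eq] at hy
  obtain ⟨w', hw0, hw1, hwy⟩ := hy
  rw [Finset.centerMass_eq_of_sum_1 _ _ hw1] at hwy
  have hinj : ∀ x ∈ V0 f, ∀ y ∈ V0 f, expEmbed x = expEmbed y → x = y :=
    fun x _ y _ h => expEmbed_injective h
  refine ⟨fun α => if α ∈ V0 f then w' (expEmbed α) else 0, ?_, ?_, ?_⟩
  · intro α; dsimp only; split_ifs with h
    · exact hw0 _ (Finset.mem_image_of_mem _ h)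
    · exact le_rfl
  · rw [Finset.sum_image hinj] at hw1
    rw [← hw1]
    exact Finset.sum_congr rfl fun α hα => by dsimp only; rw [if_pos hα]
  · rw [Finset.sum_image hinj] at hwy
    rw [← hwy]
    exact Finset.sum_congr rfl fun α hα => by dsimp only; rw [if_pos hα]; rfl

end AuxGeom
section AuxFace

variable {n : ℕ}

/-- In an extreme subset, every member of a positive convex combination lying in the
extreme set must itself belong to the extreme set. -/
lemma isExtreme_mem_of_combo {s G : Set (Fin n → ℝ)} (hs : Convex ℝ s) (hG : IsExtreme ℝ s G)
    (W : Finset (Fin n →₀ ℕ)) :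
    ∀ (w : (Fin n →₀ ℕ) → ℝ),
      (∀ a ∈ W, expEmbed a ∈ s) → (∀ a ∈ W, 0 < w a) → (∑ a ∈ W, w a) = 1 →
      (∑ a ∈ W, w a • expEmbed a) ∈ G → ∀ a ∈ W, expEmbed a ∈ G := by
  induction W using Finset.induction_on with
  | empty => intro w _ _ _ _ a ha; exact absurd ha (Finset.notMem_empty a)
  | @insert a W hnot ih =>
    intro w hp hw h1 hy b hb
    rw [Finset.sum_insert hnot] at h1 hy
    rcases W.eq_empty_or_nonempty with rfl | hWne
    · simp only [Finset.sum_empty, add_zero] at h1 hy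
      rw [h1, one_smul] at hy
      rcases Finset.mem_insert.mp hb with rfl | hbW
      · exact hy
      · exact absurd hbW (Finset.notMem_empty b)
    · have ht : 0 < ∑ x ∈ W, w x :=
        Finset.sum_pos (fun x hx => hw x (Finset.mem_insert_of_mem hx)) hWne
      set t := ∑ x ∈ W, w x with htdef
      have hwa : 0 < w a := hw a (Finset.mem_insert_self a W)
      have hq : (∑ x ∈ W, (w x / t) • expEmbed x) ∈ s := by
        apply hs.sum_mem
        · exact fun x hx => div_nonneg (hw x (Finset.mem_insert_of_mem hx)).le ht.le
        · rw [← Finset.sum_div]; exact div_self ht.ne'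
        · exact fun x hx => hp x (Finset.mem_insert_of_mem hx)
      have hz : w a • expEmbed a + t • (∑ x ∈ W, (w x / t) • expEmbed x) ∈ G := by
        have : t • (∑ x ∈ W, (w x / t) • expEmbed x) = ∑ x ∈ W, w x • expEmbed x := by
          rw [Finset.smul_sum]
          refine Finset.sum_congr rfl fun x _ => ?_
          rw [smul_smul, mul_div_cancel₀ _ ht.ne']
        rw [this]; exact hy
      have hseg : w a • expEmbed a + t • (∑ x ∈ W, (w x / t) • expEmbed x) ∈
          openSegment ℝ (expEmbed a) (∑ x ∈ W, (w x / t) • expEmbed x) :=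
        ⟨w a, t, hwa, ht, h1, rfl⟩
      have hres := hG.2 (hp a (Finset.mem_insert_self a W)) hq hz hseg
      rcases Finset.mem_insert.mp hb with rfl | hbW
      · exact hres
      · refine ih (fun x => w x / t) (fun x hx => hp x (Finset.mem_insert_of_mem hx))
          (fun x hx => div_pos (hw x (Finset.mem_insert_of_mem hx)) ht) ?_ (hG.right_mem_of_mem_openSegment (hp a (Finset.mem_insert_self a W)) hq hz hseg) b hbW
        rw [← Finset.sum_div]; exact div_self ht.ne'

lemma convex_combo3 {s : Set (Fin n → ℝ)} (hs : Convex ℝ s) {x y z : Fin n → ℝ}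
    (hx : x ∈ s) (hy : y ∈ s) (hz : z ∈ s) {a b c : ℝ}
    (ha : 0 ≤ a) (hb : 0 ≤ b) (hc : 0 ≤ c) (habc : a + b + c = 1) :
    a • x + b • y + c • z ∈ s := by
  have h := hs.sum_mem (t := (Finset.univ : Finset (Fin 3))) (w := ![a, b, c]) (z := ![x, y, z])
    (fun i _ => by fin_cases i <;> assumption)
    (by simp [Fin.sum_univ_three]; linarith)
    (fun i _ => by fin_cases i <;> assumption)
  simpa [Fin.sum_univ_three] using h

lemma exists_dilation {f : MvPolynomial (Fin n) ℝ} {αs : Fin n →₀ ℕ}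
    (hαs : αs ∈ V0c f) (hreg : αs ∉ Dfin f) :
    ∃ t : ℝ, 1 < t ∧ t • expEmbed αs ∈ newtonInfty f := by
  by_contra hcon
  push_neg at hcon
  set q := expEmbed αs with hq
  set P := newtonInfty f with hP
  set F : Set (Fin n → ℝ) := {y | y ∈ P ∧ ∃ ε : ℝ, 0 < ε ∧ q + ε • (q - y) ∈ P} with hF
  have hsupp : αs ∈ f.support := (Finset.mem_sdiff.mp hαs).1
  have hqP : q ∈ P := mem_newton_of f (Finset.mem_insert_of_mem hsupp)
  have hqF : q ∈ F := ⟨hqP, 1, one_pos, by simpa using hqP⟩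
  have key : ∀ x1 ∈ P, ∀ x2 ∈ P, ∀ a b : ℝ, 0 < a → 0 < b → a + b = 1 →
      a • x1 + b • x2 ∈ F → x1 ∈ F := by
    rintro x1 hx1 x2 hx2 a b ha hb hab ⟨-, ε, hε, hwP⟩
    have h1ε : (0:ℝ) < 1 + ε := by linarith
    have hb' : b = 1 - a := by linarith
    subst hb'
    refine ⟨hx1, ε * a / (2 * (1 + ε)), by positivity, ?_⟩
    have himem : (1 / (2 * (1 + ε))) • (q + ε • (q - (a • x1 + (1 - a) • x2)))
        + (ε * (1 - a) / (2 * (1 + ε))) • x2 + (1 / 2 + ε * a / (2 * (1 + ε))) • q ∈ P := by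
      refine convex_combo3 (newton_convex f) hwP hx2 hqP
        (by positivity) (by positivity) (by positivity) ?_
      field_simp
      ring
    have heq : (1 / (2 * (1 + ε))) • (q + ε • (q - (a • x1 + (1 - a) • x2)))
        + (ε * (1 - a) / (2 * (1 + ε))) • x2 + (1 / 2 + ε * a / (2 * (1 + ε))) • q
        = q + (ε * a / (2 * (1 + ε))) • (q - x1) := by
      match_scalars
      · field_simp
        ring
      · field_simp
      · field_simp
        ring
    rwa [heq] at himem
  have hGdeg : IsGemDegenerate f αs := by
    refine ⟨hsupp, ?_, F, ⟨q, hqF⟩, ⟨fun y hy => hy.1, ?_⟩, ?_, hqF⟩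
    · intro hVinf
      exact (Finset.mem_sdiff.mp hαs).2 (Vinf_subset_V0 f hVinf)
    · rintro x1 hx1 x2 hx2 y hyF ⟨a, b, ha, hb, hab, hy⟩
      subst hy
      exact key x1 hx1 x2 hx2 a b ha hb hab hyF
    · rintro ⟨-, ε, hε, h0⟩
      have heq0 : q + ε • (q - 0) = (1 + ε) • q := by match_scalars <;> ring
      rw [heq0] at h0
      exact hcon (1 + ε) (by linarith) h0
  exact hreg (Finset.mem_filter.mpr ⟨hsupp, hGdeg⟩)

end AuxFace
section AuxAnalytic

variable {n : ℕ}

/-- The absolute monomial value `∏ i, |x i| ^ α i`. -/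
def mval (x : Fin n → ℝ) (α : Fin n →₀ ℕ) : ℝ := ∏ i, |x i| ^ (α i)

/-- The vertex part `∑_{α ∈ V(f)} f_α |x|^α` of `f`. -/
def Sval (f : MvPolynomial (Fin n) ℝ) (x : Fin n → ℝ) : ℝ :=
  ∑ α ∈ Vinf f, f.coeff α * mval x α

lemma mval_nonneg (x : Fin n → ℝ) (α : Fin n →₀ ℕ) : 0 ≤ mval x α := by
  unfold mval; positivity

lemma abs_prod_pow (x : Fin n → ℝ) (α : Fin n →₀ ℕ) :
    |∏ i, x i ^ (α i)| = mval x α := by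
  rw [mval, Finset.abs_prod]
  exact Finset.prod_congr rfl fun i _ => (abs_pow _ _)

lemma prod_pow_eq_mval_of_even (x : Fin n → ℝ) {α : Fin n →₀ ℕ} (hα : IsEvenExp α) :
    (∏ i, x i ^ (α i)) = mval x α := by
  rw [mval]
  exact Finset.prod_congr rfl fun i _ => ((hα i).pow_abs _).symm

lemma Sval_nonneg (f : MvPolynomial (Fin n) ℝ) (hC1 : CondC1 f) (hC2 : CondC2 f)
    (x : Fin n → ℝ) : 0 ≤ Sval f x :=
  Finset.sum_nonneg fun α hα => mul_nonneg (hC2 α hα).le (mval_nonneg x α)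

/-- Key product identity: if `αs` is a nonnegative combination of the exponents in `W`,
then `|x|^{αs}` is the corresponding product of rpow-powers of `|x|^α`. -/
lemma mval_eq_prod_rpow (x : Fin n → ℝ) {W : Finset (Fin n →₀ ℕ)}
    {μ : (Fin n →₀ ℕ) → ℝ} (hμ : ∀ α ∈ W, 0 ≤ μ α) {αs : Fin n →₀ ℕ}
    (hsum : (∑ α ∈ W, μ α • expEmbed α) = expEmbed αs) :
    mval x αs = ∏ α ∈ W, (mval x α) ^ (μ α) := by
  have hcoord : ∀ i, ((αs i : ℝ)) = ∑ α ∈ W, μ α * (α i : ℝ) := by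
    intro i
    have := congrFun hsum i
    simpa [expEmbed, Finset.sum_apply, smul_eq_mul] using this.symm
  unfold mval
  calc (∏ i, |x i| ^ (αs i))
      = ∏ i, |x i| ^ ((αs i : ℝ)) := by
        exact Finset.prod_congr rfl fun i _ => (Real.rpow_natCast _ _).symm
    _ = ∏ i, ∏ α ∈ W, |x i| ^ (μ α * (α i : ℝ)) := by
        refine Finset.prod_congr rfl fun i _ => ?_
        rw [hcoord i]
        exact Real.rpow_sum_of_nonneg (abs_nonneg _)
          (fun α hα => mul_nonneg (hμ α hα) (Nat.cast_nonneg _))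
    _ = ∏ α ∈ W, ∏ i, |x i| ^ (μ α * (α i : ℝ)) := Finset.prod_comm
    _ = ∏ α ∈ W, (∏ i, |x i| ^ (α i)) ^ (μ α) := by
        refine Finset.prod_congr rfl fun α _ => ?_
        rw [← Real.finset_prod_rpow _ _ (fun i _ => pow_nonneg (abs_nonneg _) _) (μ α)]
        refine Finset.prod_congr rfl fun i _ => ?_
        rw [← Real.rpow_natCast |x i| (α i), ← Real.rpow_mul (abs_nonneg _), mul_comm]

/-- For `0 < τ < 1` and `ε > 0` there is `C ≥ 0` with `u^τ ≤ ε u + C` for all `u ≥ 0`. -/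
lemma rpow_linear_bound {τ ε : ℝ} (hτ0 : 0 < τ) (hτ1 : τ < 1) (hε : 0 < ε) :
    ∃ C : ℝ, 0 ≤ C ∧ ∀ u : ℝ, 0 ≤ u → u ^ τ ≤ ε * u + C := by
  set M : ℝ := ε ^ ((τ - 1)⁻¹) with hM
  have hMpos : 0 < M := Real.rpow_pos_of_pos hε _
  have hMτ : M ^ (τ - 1) = ε := by
    rw [hM, ← Real.rpow_mul hε.le, inv_mul_cancel₀ (by linarith : τ - 1 ≠ 0), Real.rpow_one]
  refine ⟨M ^ τ, (Real.rpow_nonneg hMpos.le _), fun u hu => ?_⟩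
  rcases le_or_gt u M with h | h
  · have : u ^ τ ≤ M ^ τ := Real.rpow_le_rpow hu h hτ0.le
    nlinarith [mul_nonneg hε.le hu]
  · have hu0 : 0 < u := lt_trans hMpos h
    have h1 : u ^ τ = u ^ (τ - 1) * u := by
      rw [← Real.rpow_add_one hu0.ne' (τ - 1)]; ring_nf
    have h2 : u ^ (τ - 1) ≤ M ^ (τ - 1) :=
      Real.rpow_le_rpow_of_nonpos hMpos h.le (by linarith)
    have h3 : u ^ (τ - 1) * u ≤ ε * u := by
      rw [← hMτ]; exact mul_le_mul_of_nonneg_right h2 hu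
    have h4 : (0:ℝ) ≤ M ^ τ := Real.rpow_nonneg hMpos.le _
    nlinarith

end AuxAnalytic
section AuxDegenerate

variable {n : ℕ}

lemma Dfin_subset_V0c (f : MvPolynomial (Fin n) ℝ) : Dfin f ⊆ V0c f := by
  intro αs hαs
  obtain ⟨hsupp, hmem⟩ := Finset.mem_filter.mp hαs
  obtain ⟨-, hnotV, G, -, -, hG0, hGα⟩ := hmem
  refine Finset.mem_sdiff.mpr ⟨hsupp, fun hV0 => ?_⟩
  have hα0 : αs ≠ 0 := by
    rintro rfl
    rw [expEmbed_zero] at hGα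
    exact hG0 hGα
  exact hnotV (Finset.mem_erase.mpr ⟨hα0, hV0⟩)

lemma degenerate_bound (f : MvPolynomial (Fin n) ℝ) (hC1 : CondC1 f) (hC2 : CondC2 f)
    (lam : (Fin n →₀ ℕ) → (Fin n →₀ ℕ) → ℝ) (hlam : IsMinBary f lam)
    {αs : Fin n →₀ ℕ} (hαs : αs ∈ Dfin f) :
    0 < circuitNumber f lam αs ∧
      ∀ x, circuitNumber f lam αs * mval x αs ≤ Sval f x := by
  have hV0c : αs ∈ V0c f := Dfin_subset_V0c f hαs
  obtain ⟨W, hWsub, -, hpos, hzero, hsum1, hsumv⟩ := hlam.2 αs hV0c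
  have hWfin : Wfin f lam αs = W := by
    ext α
    simp only [Wfin, Finset.mem_filter]
    constructor
    · rintro ⟨hV0, hp⟩
      by_contra hnW
      rw [hzero α hV0 hnW] at hp
      exact lt_irrefl 0 hp
    · intro hW
      exact ⟨hWsub hW, hpos α hW⟩
  obtain ⟨hsupp, hnotV, G, hGne, hGext, hG0, hGα⟩ := (Finset.mem_filter.mp hαs).2
  have hallG : ∀ a ∈ W, expEmbed a ∈ G := by
    refine isExtreme_mem_of_combo (newton_convex f) hGext W (lam αs)
      (fun a ha => mem_newton_of f (V0_subset_insert f (hWsub ha))) hpos hsum1 ?_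
    rw [hsumv]; exact hGα
  have h0W : (0 : Fin n →₀ ℕ) ∉ W := by
    intro h
    exact hG0 (expEmbed_zero ▸ hallG 0 h)
  have hWV : W ⊆ Vinf f := fun a ha =>
    Finset.mem_erase.mpr ⟨fun h => h0W (h ▸ ha), hWsub ha⟩
  have hΘpos : 0 < circuitNumber f lam αs := by
    rw [circuitNumber, hWfin]
    exact Finset.prod_pos fun a ha =>
      Real.rpow_pos_of_pos (div_pos (hC2 a (hWV ha)) (hpos a ha)) _
  refine ⟨hΘpos, fun x => ?_⟩
  have hmval : mval x αs = ∏ α ∈ W, (mval x α) ^ (lam αs α) :=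
    mval_eq_prod_rpow x (fun α hα => (hpos α hα).le) hsumv
  rw [circuitNumber, hWfin, hmval, ← Finset.prod_mul_distrib]
  have hmerge : ∀ α ∈ W, (f.coeff α / lam αs α) ^ lam αs α * mval x α ^ lam αs α
      = ((f.coeff α / lam αs α) * mval x α) ^ lam αs α := fun α hα =>
    (Real.mul_rpow (div_pos (hC2 α (hWV hα)) (hpos α hα)).le (mval_nonneg x α)).symm
  rw [Finset.prod_congr rfl hmerge]
  calc (∏ α ∈ W, ((f.coeff α / lam αs α) * mval x α) ^ lam αs α)
      ≤ ∑ α ∈ W, lam αs α * ((f.coeff α / lam αs α) * mval x α) :=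
        Real.geom_mean_le_arith_mean_weighted W _ _
          (fun α hα => (hpos α hα).le) hsum1
          (fun α hα => mul_nonneg (div_pos (hC2 α (hWV hα)) (hpos α hα)).le (mval_nonneg x α))
    _ = ∑ α ∈ W, f.coeff α * mval x α := by
        refine Finset.sum_congr rfl fun α hα => ?_
        have hne : lam αs α ≠ 0 := (hpos α hα).ne'
        field_simp
    _ ≤ Sval f x := by
        refine Finset.sum_le_sum_of_subset_of_nonneg hWV fun α hα _ => ?_
        exact mul_nonneg (hC2 α hα).le (mval_nonneg x α)

lemma degenerate_sum_bound (f : MvPolynomial (Fin n) ℝ) (hC1 : CondC1 f) (hC2 : CondC2 f)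
    (lam : (Fin n →₀ ℕ) → (Fin n →₀ ℕ) → ℝ) (hlam : IsMinBary f lam) (x : Fin n → ℝ) :
    -(((∑ αs ∈ (Dfin f).filter fun αs => ¬ IsEvenExp αs,
          |f.coeff αs| / circuitNumber f lam αs)
        - ∑ αs ∈ (Dfin f).filter fun αs => IsEvenExp αs,
          min 0 (f.coeff αs) / circuitNumber f lam αs) * Sval f x)
      ≤ ∑ αs ∈ Dfin f, f.coeff αs * ∏ i, x i ^ (αs i) := by
  have hsplit := Finset.sum_filter_add_sum_filter_not (Dfin f) (fun αs => IsEvenExp αs)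
    (fun αs => f.coeff αs * ∏ i, x i ^ (αs i))
  rw [← hsplit]
  have hS := Sval_nonneg f hC1 hC2 x
  have heven : ∀ αs ∈ (Dfin f).filter (fun αs => IsEvenExp αs),
      (min 0 (f.coeff αs) / circuitNumber f lam αs) * Sval f x
        ≤ f.coeff αs * ∏ i, x i ^ (αs i) := by
    intro αs hmem
    obtain ⟨hD, hev⟩ := Finset.mem_filter.mp hmem
    obtain ⟨hΘ, hbd⟩ := degenerate_bound f hC1 hC2 lam hlam hD
    rw [prod_pow_eq_mval_of_even x hev]
    have h1 : mval x αs ≤ Sval f x / circuitNumber f lam αs :=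
      (le_div_iff₀ hΘ).mpr (by rw [mul_comm]; exact hbd x)
    have h2 : min 0 (f.coeff αs) ≤ 0 := min_le_left _ _
    have h3 : min 0 (f.coeff αs) * (Sval f x / circuitNumber f lam αs)
        ≤ min 0 (f.coeff αs) * mval x αs := mul_le_mul_of_nonpos_left h1 h2
    have h4 : min 0 (f.coeff αs) * mval x αs ≤ f.coeff αs * mval x αs :=
      mul_le_mul_of_nonneg_right (min_le_right _ _) (mval_nonneg x αs)
    calc (min 0 (f.coeff αs) / circuitNumber f lam αs) * Sval f x
        = min 0 (f.coeff αs) * (Sval f x / circuitNumber f lam αs) := by ring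
      _ ≤ min 0 (f.coeff αs) * mval x αs := h3
      _ ≤ f.coeff αs * mval x αs := h4
  have hodd : ∀ αs ∈ (Dfin f).filter (fun αs => ¬ IsEvenExp αs),
      -((|f.coeff αs| / circuitNumber f lam αs) * Sval f x)
        ≤ f.coeff αs * ∏ i, x i ^ (αs i) := by
    intro αs hmem
    obtain ⟨hD, -⟩ := Finset.mem_filter.mp hmem
    obtain ⟨hΘ, hbd⟩ := degenerate_bound f hC1 hC2 lam hlam hD
    have h1 : mval x αs ≤ Sval f x / circuitNumber f lam αs :=
      (le_div_iff₀ hΘ).mpr (by rw [mul_comm]; exact hbd x)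
    have h2 : |f.coeff αs * ∏ i, x i ^ (αs i)| ≤ (|f.coeff αs| / circuitNumber f lam αs) * Sval f x := by
      rw [abs_mul, abs_prod_pow]
      calc |f.coeff αs| * mval x αs
          ≤ |f.coeff αs| * (Sval f x / circuitNumber f lam αs) :=
            mul_le_mul_of_nonneg_left h1 (abs_nonneg _)
        _ = (|f.coeff αs| / circuitNumber f lam αs) * Sval f x := by ring
    have := neg_abs_le (f.coeff αs * ∏ i, x i ^ (αs i))
    linarith
  have hA := Finset.sum_le_sum hodd
  have hB := Finset.sum_le_sum heven
  rw [Finset.sum_neg_distrib] at hA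
  rw [sub_mul, Finset.sum_mul, Finset.sum_mul]
  linarith

end AuxDegenerate
section AuxRegular

variable {n : ℕ}

lemma regular_bound (f : MvPolynomial (Fin n) ℝ) (hC1 : CondC1 f) (hC2 : CondC2 f)
    (hne : (Vinf f).Nonempty) {αs : Fin n →₀ ℕ} (hαs : αs ∈ V0c f) (hreg : αs ∉ Dfin f) :
    ∀ ε : ℝ, 0 < ε → ∃ C : ℝ, ∀ x, |f.coeff αs| * mval x αs ≤ ε * Sval f x + C := by
  obtain ⟨t, ht1, htP⟩ := exists_dilation hαs hreg
  have htpos : (0:ℝ) < t := lt_trans one_pos ht1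
  obtain ⟨w, hw0, hw1, hwv⟩ := mem_newton_rep f htP
  set μ : (Fin n →₀ ℕ) → ℝ := fun α => w α / t with hμdef
  have hμ0 : ∀ α, 0 ≤ μ α := fun α => div_nonneg (hw0 α) htpos.le
  have hvec : (∑ α ∈ Vinf f, μ α • expEmbed α) = expEmbed αs := by
    have h2 : (∑ α ∈ Vinf f, w α • expEmbed α) = t • expEmbed αs := by
      rw [V0_eq f, Finset.sum_insert (zero_not_mem_Vinf f)] at hwv
      rw [expEmbed_zero, smul_zero, zero_add] at hwv
      exact hwv
    calc (∑ α ∈ Vinf f, μ α • expEmbed α)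
        = t⁻¹ • ∑ α ∈ Vinf f, w α • expEmbed α := by
          rw [Finset.smul_sum]
          refine Finset.sum_congr rfl fun α _ => ?_
          rw [smul_smul, hμdef]
          congr 1
          field_simp
      _ = expEmbed αs := by rw [h2, smul_smul, inv_mul_cancel₀ htpos.ne', one_smul]
  set τ := ∑ α ∈ Vinf f, μ α with hτ
  have hτ1 : τ < 1 := by
    have h1 : (∑ α ∈ Vinf f, w α) ≤ 1 := by
      rw [← hw1]
      exact Finset.sum_le_sum_of_subset_of_nonneg (Vinf_subset_V0 f) fun α _ _ => hw0 α
    have h2 : τ = (∑ α ∈ Vinf f, w α) / t := by rw [hτ, Finset.sum_div]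
    rw [h2]
    calc (∑ α ∈ Vinf f, w α) / t ≤ 1 / t := by
          gcongr
      _ < 1 := by rw [div_lt_one htpos]; exact ht1
  have hτ0 : 0 < τ := by
    rcases (Finset.sum_nonneg fun α _ => hμ0 α).lt_or_eq with h | h
    · exact h
    · exfalso
      have hzero : ∀ α ∈ Vinf f, μ α = 0 := by
        intro α hα
        exact (Finset.sum_eq_zero_iff_of_nonneg fun β _ => hμ0 β).mp h.symm α hα
      have : expEmbed αs = 0 := by
        rw [← hvec]
        refine Finset.sum_eq_zero fun α hα => by rw [hzero α hα, zero_smul]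
      have hα0 : αs = (0 : Fin n →₀ ℕ) := expEmbed_injective (by rw [this, expEmbed_zero])
      have := (Finset.mem_sdiff.mp hαs).2
      rw [hα0] at this
      exact this (zero_mem_V0 f)
  obtain ⟨β, hβ, hmin⟩ := Finset.exists_min_image (Vinf f) f.coeff hne
  set m := f.coeff β with hm
  have hmpos : 0 < m := hC2 β hβ
  intro ε hε
  set ε0 := ε * τ * m / (|f.coeff αs| + 1) with hε0def
  have habs1 : (0:ℝ) < |f.coeff αs| + 1 := by positivity
  have hε0 : 0 < ε0 := by rw [hε0def]; positivity
  obtain ⟨C0, hC00, hC0⟩ := rpow_linear_bound hτ0 hτ1 hε0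
  refine ⟨|f.coeff αs| * C0, fun x => ?_⟩
  have hid : mval x αs = ∏ α ∈ Vinf f, (mval x α) ^ (μ α) :=
    mval_eq_prod_rpow x (fun α _ => hμ0 α) hvec
  have step1 : (∏ α ∈ Vinf f, (mval x α) ^ (μ α))
      ≤ ∑ α ∈ Vinf f, (μ α / τ) * ((mval x α) ^ τ) := by
    have hrw : ∀ α ∈ Vinf f, (mval x α) ^ (μ α) = ((mval x α) ^ τ) ^ (μ α / τ) := by
      intro α _
      rw [← Real.rpow_mul (mval_nonneg x α)]
      congr 1
      field_simp
    rw [Finset.prod_congr rfl hrw]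
    exact Real.geom_mean_le_arith_mean_weighted _ _ _
      (fun α _ => div_nonneg (hμ0 α) hτ0.le)
      (by rw [← Finset.sum_div]; exact div_self hτ0.ne')
      (fun α _ => Real.rpow_nonneg (mval_nonneg x α) _)
  have step2 : (∑ α ∈ Vinf f, (μ α / τ) * ((mval x α) ^ τ))
      ≤ ∑ α ∈ Vinf f, (μ α / τ) * (ε0 * mval x α + C0) := by
    refine Finset.sum_le_sum fun α hα => ?_
    exact mul_le_mul_of_nonneg_left (hC0 _ (mval_nonneg x α)) (div_nonneg (hμ0 α) hτ0.le)
  have step3 : (∑ α ∈ Vinf f, (μ α / τ) * (ε0 * mval x α + C0))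
      = ε0 * (∑ α ∈ Vinf f, (μ α / τ) * mval x α) + C0 := by
    have hsum1 : (∑ α ∈ Vinf f, μ α / τ) = 1 := by
      rw [← Finset.sum_div]; exact div_self hτ0.ne'
    calc (∑ α ∈ Vinf f, (μ α / τ) * (ε0 * mval x α + C0))
        = (∑ α ∈ Vinf f, ε0 * ((μ α / τ) * mval x α)) + (∑ α ∈ Vinf f, (μ α / τ)) * C0 := by
          rw [Finset.sum_mul, ← Finset.sum_add_distrib]
          exact Finset.sum_congr rfl fun α _ => by ring
      _ = ε0 * (∑ α ∈ Vinf f, (μ α / τ) * mval x α) + C0 := by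
          rw [hsum1, one_mul, ← Finset.mul_sum]
  have step4 : (∑ α ∈ Vinf f, (μ α / τ) * mval x α) ≤ Sval f x / (τ * m) := by
    rw [Sval, Finset.sum_div]
    refine Finset.sum_le_sum fun α hα => ?_
    have hμτ : μ α ≤ τ := Finset.single_le_sum (fun β _ => hμ0 β) hα
    have hmc : m ≤ f.coeff α := hmin α hα
    have hmv := mval_nonneg x α
    rw [div_mul_eq_mul_div, div_le_div_iff₀ (by positivity) (by positivity)]
    have hμ1 : μ α ≤ 1 := le_trans hμτ hτ1.le
    have h12 : μ α * m ≤ f.coeff α := by nlinarith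
    nlinarith [mul_nonneg (sub_nonneg.mpr h12) (mul_nonneg hmv hτ0.le)]
  have hS := Sval_nonneg f hC1 hC2 x
  have hchain : mval x αs ≤ ε0 * (Sval f x / (τ * m)) + C0 := by
    rw [hid]
    calc (∏ α ∈ Vinf f, (mval x α) ^ (μ α))
        ≤ ∑ α ∈ Vinf f, (μ α / τ) * ((mval x α) ^ τ) := step1
      _ ≤ ∑ α ∈ Vinf f, (μ α / τ) * (ε0 * mval x α + C0) := step2
      _ = ε0 * (∑ α ∈ Vinf f, (μ α / τ) * mval x α) + C0 := step3
      _ ≤ ε0 * (Sval f x / (τ * m)) + C0 := by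
          have := mul_le_mul_of_nonneg_left step4 hε0.le
          linarith
  have hfinal : |f.coeff αs| * (ε0 * (Sval f x / (τ * m)) + C0)
      ≤ ε * Sval f x + |f.coeff αs| * C0 := by
    have hkey : |f.coeff αs| * (ε0 / (τ * m)) ≤ ε := by
      rw [hε0def]
      rw [div_div]
      have : ε * τ * m / ((|f.coeff αs| + 1) * (τ * m)) = ε / (|f.coeff αs| + 1) := by
        field_simp
      rw [this]
      rw [mul_div, div_le_iff₀ habs1]
      nlinarith [abs_nonneg (f.coeff αs)]
    have h5 : |f.coeff αs| * (ε0 * (Sval f x / (τ * m)))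
        = (|f.coeff αs| * (ε0 / (τ * m))) * Sval f x := by ring
    have h6 : (|f.coeff αs| * (ε0 / (τ * m))) * Sval f x ≤ ε * Sval f x :=
      mul_le_mul_of_nonneg_right hkey hS
    calc |f.coeff αs| * (ε0 * (Sval f x / (τ * m)) + C0)
        = (|f.coeff αs| * (ε0 / (τ * m))) * Sval f x + |f.coeff αs| * C0 := by ring
      _ ≤ ε * Sval f x + |f.coeff αs| * C0 := by linarith
  calc |f.coeff αs| * mval x αs
      ≤ |f.coeff αs| * (ε0 * (Sval f x / (τ * m)) + C0) :=
        mul_le_mul_of_nonneg_left hchain (abs_nonneg _)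
    _ ≤ ε * Sval f x + |f.coeff αs| * C0 := hfinal

lemma sum_small {ι : Type*} (S : (Fin n → ℝ) → ℝ) (hS : ∀ x, 0 ≤ S x)
    (g : ι → (Fin n → ℝ) → ℝ) (T : Finset ι) :
    (∀ a ∈ T, ∀ ε : ℝ, 0 < ε → ∃ C : ℝ, ∀ x, g a x ≤ ε * S x + C) →
    ∀ ε : ℝ, 0 < ε → ∃ C : ℝ, ∀ x, (∑ a ∈ T, g a x) ≤ ε * S x + C := by
  induction T using Finset.induction_on with
  | empty =>
    intro _ ε hε
    exact ⟨0, fun x => by simpa using mul_nonneg hε.le (hS x)⟩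
  | @insert a T hnot ih =>
    intro h ε hε
    obtain ⟨C1, hC1⟩ := h a (Finset.mem_insert_self a T) (ε/2) (by linarith)
    obtain ⟨C2, hC2⟩ := ih (fun b hb => h b (Finset.mem_insert_of_mem hb)) (ε/2) (by linarith)
    refine ⟨C1 + C2, fun x => ?_⟩
    rw [Finset.sum_insert hnot]
    have := hC1 x
    have := hC2 x
    linarith

end AuxRegular
section AuxFinal

variable {n : ℕ}

lemma eval_decomp (f : MvPolynomial (Fin n) ℝ) (hC1 : CondC1 f) (x : Fin n → ℝ) :
    MvPolynomial.eval x f = Sval f x + f.coeff 0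
      + (∑ αs ∈ Dfin f, f.coeff αs * ∏ i, x i ^ (αs i))
      + (∑ αs ∈ V0c f \ Dfin f, f.coeff αs * ∏ i, x i ^ (αs i)) := by
  have hD : Dfin f ⊆ V0c f := Dfin_subset_V0c f
  rw [MvPolynomial.eval_eq']
  have hsub : f.support ⊆ insert 0 (Vinf f ∪ V0c f) := by
    intro α hα
    by_cases hV : α ∈ V0 f
    · rw [V0_eq f] at hV
      rcases Finset.mem_insert.mp hV with h | h
      · exact h ▸ Finset.mem_insert_self _ _
      · exact Finset.mem_insert_of_mem (Finset.mem_union_left _ h)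
    · exact Finset.mem_insert_of_mem
        (Finset.mem_union_right _ (Finset.mem_sdiff.mpr ⟨hα, hV⟩))
  rw [Finset.sum_subset hsub (fun α _ hα => by
    rw [MvPolynomial.notMem_support_iff.mp hα, zero_mul])]
  have h0 : (0 : Fin n →₀ ℕ) ∉ Vinf f ∪ V0c f := by
    intro h
    rcases Finset.mem_union.mp h with h | h
    · exact zero_not_mem_Vinf f h
    · exact (Finset.mem_sdiff.mp h).2 (zero_mem_V0 f)
  have hdisj : Disjoint (Vinf f) (V0c f) := by
    rw [Finset.disjoint_left]
    intro α hα hα'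
    exact (Finset.mem_sdiff.mp hα').2 (Vinf_subset_V0 f hα)
  rw [Finset.sum_insert h0, Finset.sum_union hdisj]
  have hzeroterm : f.coeff 0 * (∏ i, x i ^ ((0 : Fin n →₀ ℕ) i)) = f.coeff 0 := by
    simp
  have hVinfterm : (∑ α ∈ Vinf f, f.coeff α * ∏ i, x i ^ (α i)) = Sval f x := by
    refine Finset.sum_congr rfl fun α hα => ?_
    rw [prod_pow_eq_mval_of_even x (hC1 α hα)]
  have hV0csplit : (∑ αs ∈ V0c f, f.coeff αs * ∏ i, x i ^ (αs i))
      = (∑ αs ∈ V0c f \ Dfin f, f.coeff αs * ∏ i, x i ^ (αs i))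
        + (∑ αs ∈ Dfin f, f.coeff αs * ∏ i, x i ^ (αs i)) :=
    (Finset.sum_sdiff hD).symm
  rw [hzeroterm, hVinfterm, hV0csplit]
  ring

lemma Sval_norm_bound (f : MvPolynomial (Fin n) ℝ) (hC1 : CondC1 f) (hC2 : CondC2 f)
    (hC3 : CondC3 f) (hn : 0 < n) :
    ∃ m0 : ℝ, 0 < m0 ∧ ∀ x : Fin n → ℝ, m0 * ‖x‖^2 - m0 ≤ Sval f x := by
  have hFin : Nonempty (Fin n) := Fin.pos_iff_nonempty.mp hn
  set k : Fin n → ℕ := fun i => (hC3 i).choose with hk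
  have hkspec : ∀ i, 0 < k i ∧ Finsupp.single i (2 * k i) ∈ Vinf f :=
    fun i => (hC3 i).choose_spec
  set c : Fin n → ℝ := fun i => f.coeff (Finsupp.single i (2 * k i)) with hc
  have hcpos : ∀ i, 0 < c i := fun i => hC2 _ (hkspec i).2
  obtain ⟨j, -, hj⟩ := Finset.exists_min_image Finset.univ c Finset.univ_nonempty
  set m0 := c j with hm0
  have hm0pos : 0 < m0 := hcpos j
  refine ⟨m0, hm0pos, fun x => ?_⟩
  have hcoord : ∀ i : Fin n, m0 * (x i)^2 - m0 ≤ Sval f x := by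
    intro i
    have hmv : mval x (Finsupp.single i (2 * k i)) = |x i| ^ (2 * k i) := by
      rw [mval]
      rw [Finset.prod_eq_single i]
      · rw [Finsupp.single_apply, if_pos rfl]
      · intro j' _ hji
        rw [Finsupp.single_apply, if_neg (fun h => hji h.symm), pow_zero]
      · intro h
        exact absurd (Finset.mem_univ i) h
    have hterm : c i * mval x (Finsupp.single i (2 * k i)) ≤ Sval f x := by
      refine Finset.single_le_sum (fun α hα => mul_nonneg (hC2 α hα).le (mval_nonneg x α))
        (hkspec i).2
    have hpow : (x i)^2 - 1 ≤ |x i| ^ (2 * k i) := by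
      rcases le_or_gt (|x i|) 1 with h | h
      · have h1 : (x i)^2 ≤ 1 := by
          rw [← sq_abs]
          exact pow_le_one₀ (abs_nonneg _) h
        have h2 : (0:ℝ) ≤ |x i| ^ (2 * k i) := pow_nonneg (abs_nonneg _) _
        linarith
      · have h1 : |x i| ^ 2 ≤ |x i| ^ (2 * k i) := by
          apply pow_le_pow_right₀ h.le
          have := (hkspec i).1
          omega
        rw [sq_abs] at h1
        linarith
    have hmineq : m0 ≤ c i := hj i (Finset.mem_univ i)
    have hmv0 : 0 ≤ mval x (Finsupp.single i (2 * k i)) := mval_nonneg x _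
    calc m0 * (x i)^2 - m0 = m0 * ((x i)^2 - 1) := by ring
      _ ≤ m0 * mval x (Finsupp.single i (2 * k i)) := by
          rw [hmv]
          exact mul_le_mul_of_nonneg_left hpow hm0pos.le
      _ ≤ c i * mval x (Finsupp.single i (2 * k i)) :=
          mul_le_mul_of_nonneg_right hmineq hmv0
      _ ≤ Sval f x := hterm
  have hSx := Sval_nonneg f hC1 hC2 x
  have hxj : ∀ i : Fin n, |x i| ≤ Real.sqrt ((Sval f x + m0) / m0) := by
    intro i
    have h1 : (x i)^2 ≤ (Sval f x + m0) / m0 := by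
      rw [le_div_iff₀ hm0pos]
      have := hcoord i
      nlinarith
    calc |x i| = Real.sqrt ((x i)^2) := (Real.sqrt_sq_eq_abs _).symm
      _ ≤ Real.sqrt ((Sval f x + m0) / m0) := Real.sqrt_le_sqrt h1
  have hnorm : ‖x‖ ≤ Real.sqrt ((Sval f x + m0) / m0) := by
    rw [pi_norm_le_iff_of_nonneg (Real.sqrt_nonneg _)]
    intro i
    rw [Real.norm_eq_abs]
    exact hxj i
  have hnorm2 : ‖x‖^2 ≤ (Sval f x + m0) / m0 := by
    calc ‖x‖^2 ≤ (Real.sqrt ((Sval f x + m0) / m0))^2 := by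
          exact pow_le_pow_left₀ (norm_nonneg _) hnorm 2
      _ = (Sval f x + m0) / m0 := Real.sq_sqrt (by positivity)
  rw [le_div_iff₀ hm0pos] at hnorm2
  nlinarith

end AuxFinal
/-- Theorem: restated sufficient condition for coercivity via the
posynomial inequality in the circuit numbers. -/
theorem stmt2 {n : ℕ} (f : MvPolynomial (Fin n) ℝ)
    (hC1 : CondC1 f) (hC2 : CondC2 f) (hC3 : CondC3 f)
    (lam : (Fin n →₀ ℕ) → (Fin n →₀ ℕ) → ℝ) (hlam : IsMinBary f lam)
    (hineq : (∑ αs ∈ (Dfin f).filter fun αs => ¬ IsEvenExp αs,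
          |f.coeff αs| / circuitNumber f lam αs)
        - (∑ αs ∈ (Dfin f).filter fun αs => IsEvenExp αs,
          min 0 (f.coeff αs) / circuitNumber f lam αs) < 1) :
    Coercive fun x => MvPolynomial.eval x f := by
  unfold Coercive
  rcases Nat.eq_zero_or_pos n with hn | hn
  · subst hn
    have hbot : (comap (fun x : Fin 0 → ℝ => ‖x‖) atTop) = ⊥ := by
      rw [← Filter.empty_mem_iff_bot]
      refine Filter.mem_comap.mpr ⟨Set.Ici 1, Filter.Ici_mem_atTop 1, ?_⟩
      intro x hx
      exfalso
      have hx0 : x = 0 := funext fun i => i.elim0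
      rw [Set.mem_preimage, hx0, norm_zero] at hx
      simp only [Set.mem_Ici] at hx
      linarith
    rw [hbot]
    exact tendsto_bot
  · have hne : (Vinf f).Nonempty := by
      obtain ⟨i⟩ := Fin.pos_iff_nonempty.mp hn
      obtain ⟨kk, -, hmem⟩ := hC3 i
      exact ⟨_, hmem⟩
    set A := ∑ αs ∈ (Dfin f).filter fun αs => ¬ IsEvenExp αs,
      |f.coeff αs| / circuitNumber f lam αs with hA
    set B := ∑ αs ∈ (Dfin f).filter fun αs => IsEvenExp αs,
      min 0 (f.coeff αs) / circuitNumber f lam αs with hB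
    set ε := (1 - (A - B)) / 2 with hε
    have hεpos : 0 < ε := by rw [hε]; linarith
    have hregprop : ∀ αs ∈ V0c f \ Dfin f, ∀ ε' : ℝ, 0 < ε' → ∃ C : ℝ, ∀ x,
        |f.coeff αs| * mval x αs ≤ ε' * Sval f x + C := by
      intro αs hαs
      obtain ⟨h1, h2⟩ := Finset.mem_sdiff.mp hαs
      exact regular_bound f hC1 hC2 hne h1 h2
    obtain ⟨C, hC⟩ := sum_small (Sval f) (Sval_nonneg f hC1 hC2)
      (fun αs x => |f.coeff αs| * mval x αs) (V0c f \ Dfin f) hregprop ε hεpos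
    obtain ⟨m0, hm0, hSn⟩ := Sval_norm_bound f hC1 hC2 hC3 hn
    have hpt : ∀ x : Fin n → ℝ,
        ε * m0 * ‖x‖ ^ 2 - (ε * m0 + C - f.coeff 0) ≤ MvPolynomial.eval x f := by
      intro x
      have hdec := eval_decomp f hC1 x
      have hdeg := degenerate_sum_bound f hC1 hC2 lam hlam x
      rw [← hA, ← hB] at hdeg
      have hregsum : -(ε * Sval f x + C)
          ≤ ∑ αs ∈ V0c f \ Dfin f, f.coeff αs * ∏ i, x i ^ (αs i) := by
        have h1 : ∀ αs ∈ V0c f \ Dfin f,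
            -( |f.coeff αs| * mval x αs) ≤ f.coeff αs * ∏ i, x i ^ (αs i) := by
          intro αs _
          have h := neg_abs_le (f.coeff αs * ∏ i, x i ^ (αs i))
          rw [abs_mul, abs_prod_pow] at h
          exact h
        have h2 := Finset.sum_le_sum h1
        rw [Finset.sum_neg_distrib] at h2
        have h3 := hC x
        linarith
      have hS := Sval_nonneg f hC1 hC2 x
      have hkey : -((A - B) * Sval f x) = -(Sval f x) + 2 * (ε * Sval f x) := by
        rw [hε]; ring
      rw [hkey] at hdeg
      have hcomb : ε * Sval f x - C + f.coeff 0 ≤ MvPolynomial.eval x f := by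
        rw [hdec]; linarith
      have h7 : ε * (m0 * ‖x‖ ^ 2 - m0) ≤ ε * Sval f x :=
        mul_le_mul_of_nonneg_left (hSn x) hεpos.le
      have h8 : ε * (m0 * ‖x‖ ^ 2 - m0) = ε * m0 * ‖x‖ ^ 2 - ε * m0 := by ring
      linarith
    have hφ : Tendsto (fun r : ℝ => ε * m0 * r ^ 2 - (ε * m0 + C - f.coeff 0)) atTop atTop := by
      have h1 : Tendsto (fun r : ℝ => r ^ 2) atTop atTop := tendsto_pow_atTop two_ne_zero
      have h2 := h1.const_mul_atTop (show (0:ℝ) < ε * m0 by positivity)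
      simpa [sub_eq_add_neg] using
        tendsto_atTop_add_const_right atTop (-(ε * m0 + C - f.coeff 0)) h2
    have hcomp : Tendsto (fun x : Fin n → ℝ => ε * m0 * ‖x‖ ^ 2 - (ε * m0 + C - f.coeff 0))
        (comap (fun x : Fin n → ℝ => ‖x‖) atTop) atTop := hφ.comp tendsto_comap
    exact tendsto_atTop_mono hpt hcomp

end
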